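/- Let g_sr and g_rr be independent exponential random variables with means π_sr > 0 and π_rr > 0, respectively. Fix P_s, P_r > 0, C ∈ [0,1], r > 0, set γ = 2^{2r} − 1 and α = P_r·π_rr/(P_r·π_rr + 1). Then the Rayleigh-fading S–R outage probability satisfies P[(P_s·g_sr + P_r·g_rr + 1)² − (P_r·g_rr·C)² < 2^{2r}·((P_r·g_rr + 1)² − (P_r·g_rr·C)²)] ≤ 1 − exp( − ((P_r·π_rr + 1)/(P_s·π_sr)) · Ψ_γ(α·C) ). -/

import Mathlib

open MeasureTheory ProbabilityTheory Real

/-- `Psi γ x = √(1 + γ(1 - x²)) - 1`. -/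
noncomputable def Psi (γ x : ℝ) : ℝ := Real.sqrt (1 + γ * (1 - x ^ 2)) - 1

/-- The exponential law with mean `π`, given by its density `(1/π) e^(-x/π)` on `[0, ∞)`. -/
noncomputable def expLaw (mean : ℝ) : Measure ℝ :=
  volume.withDensity fun x =>
    ENNReal.ofReal (if 0 ≤ x then (1 / mean) * Real.exp (-x / mean) else 0)

open Set
open scoped ENNReal NNReal

lemma expLaw_eq_expMeasure (m : ℝ) : expLaw m = ProbabilityTheory.expMeasure (1/m) := by
  unfold expLaw ProbabilityTheory.expMeasure ProbabilityTheory.gammaMeasure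
  congr 1
  funext x
  rw [show ProbabilityTheory.gammaPDF 1 (1/m) x = ProbabilityTheory.exponentialPDF (1/m) x from rfl,
    ProbabilityTheory.exponentialPDF_eq]
  congr 1
  split_ifs with h
  · rw [show -x/m = -(1/m*x) by ring]
  · rfl

lemma expLaw_isProb {m : ℝ} (hm : 0 < m) : IsProbabilityMeasure (expLaw m) := by
  rw [expLaw_eq_expMeasure]
  exact ProbabilityTheory.isProbabilityMeasure_expMeasure (by positivity)

lemma expLaw_Iio_of_nonneg {m t : ℝ} (hm : 0 < m) (ht : 0 ≤ t) :
    expLaw m (Iio t) = ENNReal.ofReal (1 - Real.exp (-(t/m))) := by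
  have hIic : expLaw m (Iic t) = ENNReal.ofReal (1 - Real.exp (-(t/m))) := by
    rw [expLaw_eq_expMeasure]
    unfold ProbabilityTheory.expMeasure ProbabilityTheory.gammaMeasure
    rw [withDensity_apply _ measurableSet_Iic]
    rw [show (ProbabilityTheory.gammaPDF 1 (1/m)) = (ProbabilityTheory.exponentialPDF (1/m)) from rfl]
    rw [ProbabilityTheory.lintegral_exponentialPDF_eq_antiDeriv (by positivity) t, if_pos ht]
    congr 2
    ring
  have hsing : expLaw m {t} = 0 := by
    unfold expLaw
    rw [withDensity_apply _ (measurableSet_singleton t)]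
    exact setLIntegral_measure_zero _ _ (measure_singleton t)
  have hsplit : expLaw m (Iic t) = expLaw m (Iio t) + expLaw m {t} := by
    rw [← measure_union (by simp) (measurableSet_singleton t)]
    congr 1
    ext y; simp [le_iff_lt_or_eq]
  rw [hsplit, hsing, add_zero] at hIic
  exact hIic

lemma expLaw_Iio_zero (m : ℝ) : expLaw m (Iio 0) = 0 := by
  unfold expLaw
  rw [withDensity_apply _ measurableSet_Iio]
  rw [setLIntegral_congr_fun measurableSet_Iio
    (fun x (hx : x < 0) => by rw [if_neg (not_le.mpr hx), ENNReal.ofReal_zero])]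
  simp

lemma expLaw_ae_nonneg {m : ℝ} : ∀ᵐ x ∂(expLaw m), 0 ≤ x := by
  rw [ae_iff]
  have : {x : ℝ | ¬ 0 ≤ x} = Iio 0 := by ext x; simp
  rw [this]
  unfold expLaw
  rw [withDensity_apply _ measurableSet_Iio]
  rw [setLIntegral_congr_fun measurableSet_Iio
    (fun x (hx : x < 0) => by rw [if_neg (not_le.mpr hx), ENNReal.ofReal_zero])]
  simp

lemma expLaw_densR_meas (m : ℝ) :
    Measurable (fun x : ℝ => if 0 ≤ x then (1 / m) * Real.exp (-x / m) else 0) :=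
  Measurable.ite measurableSet_Ici
    ((measurable_id.neg.div_const m).exp.const_mul _) measurable_const

lemma expLaw_eq_withDensity_nnreal (m : ℝ) :
    expLaw m = volume.withDensity
      (fun x => ((Real.toNNReal (if 0 ≤ x then (1 / m) * Real.exp (-x / m) else 0) : ℝ≥0) : ℝ≥0∞)) :=
  rfl

lemma expLaw_integral_smul {m : ℝ} (hm : 0 < m) (g : ℝ → ℝ) :
    ∫ x, g x ∂(expLaw m)
      = ∫ x, (if 0 ≤ x then (1 / m) * Real.exp (-x / m) else 0) * g x := by
  rw [expLaw_eq_withDensity_nnreal,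
    integral_withDensity_eq_integral_smul
      (f := fun x => Real.toNNReal (if 0 ≤ x then (1 / m) * Real.exp (-x / m) else 0))
      (measurable_real_toNNReal.comp (expLaw_densR_meas m))]
  congr 1
  funext x
  rw [NNReal.smul_def, smul_eq_mul, Real.coe_toNNReal _ (by split_ifs with h <;> positivity)]

lemma integrableOn_mul_exp {m : ℝ} (hm : 0 < m) :
    IntegrableOn (fun x : ℝ => (1 / m) * Real.exp (-x / m) * x) (Ioi 0) := by
  have h0 : IntegrableOn (fun x : ℝ => Real.exp (-x) * x ^ ((2:ℝ) - 1)) (Ioi 0) :=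
    Real.GammaIntegral_convergent (by norm_num)
  have h1 : IntegrableOn (fun x : ℝ => Real.exp (-(m⁻¹ * x)) * (m⁻¹ * x) ^ ((2:ℝ) - 1))
      (Ioi 0) := by
    have := (integrableOn_Ioi_comp_mul_left_iff
      (fun x : ℝ => Real.exp (-x) * x ^ ((2:ℝ) - 1)) 0 (inv_pos.mpr hm)).mpr
    simp only [mul_zero] at this
    exact this h0
  refine h1.congr_fun (fun x hx => ?_) measurableSet_Ioi
  have : ((2:ℝ) - 1) = 1 := by norm_num
  rw [this]; beta_reduce; rw [Real.rpow_one]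
  rw [show -(m⁻¹ * x) = -x/m by ring]
  ring

lemma expLaw_integrable_id {m : ℝ} (hm : 0 < m) :
    Integrable (fun x : ℝ => x) (expLaw m) := by
  rw [expLaw_eq_withDensity_nnreal,
    integrable_withDensity_iff_integrable_smul
      (f := fun x => Real.toNNReal (if 0 ≤ x then (1 / m) * Real.exp (-x / m) else 0))
      (measurable_real_toNNReal.comp (expLaw_densR_meas m))]
  have heq : (fun x : ℝ => (Real.toNNReal (if 0 ≤ x then (1 / m) * Real.exp (-x / m) else 0)) • x)
      = fun x : ℝ => (Ici (0:ℝ)).indicator (fun x => (1 / m) * Real.exp (-x / m) * x) x := by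
    funext x
    rw [NNReal.smul_def, smul_eq_mul, Real.coe_toNNReal _ (by split_ifs with h <;> positivity)]
    by_cases h : 0 ≤ x
    · rw [if_pos h, Set.indicator_of_mem (mem_Ici.mpr h)]
    · rw [if_neg h, Set.indicator_of_notMem (by simpa using h), zero_mul]
  rw [heq]
  rw [integrable_indicator_iff measurableSet_Ici]
  rw [IntegrableOn, Measure.restrict_congr_set Ioi_ae_eq_Ici.symm]
  exact integrableOn_mul_exp hm

lemma expLaw_mean {m : ℝ} (hm : 0 < m) : ∫ x, x ∂(expLaw m) = m := by
  rw [expLaw_integral_smul hm (fun x => x)]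
  have heq : (fun x : ℝ => (if 0 ≤ x then (1 / m) * Real.exp (-x / m) else 0) * x)
      = fun x : ℝ => (Ici (0:ℝ)).indicator (fun x => (1 / m) * Real.exp (-x / m) * x) x := by
    funext x
    by_cases h : 0 ≤ x
    · rw [if_pos h, Set.indicator_of_mem (mem_Ici.mpr h)]
    · rw [if_neg h, Set.indicator_of_notMem (by simpa using h), zero_mul]
  rw [heq, integral_indicator measurableSet_Ici, integral_Ici_eq_integral_Ioi]
  have : ∫ x in Ioi (0:ℝ), (1 / m) * Real.exp (-x / m) * x
      = ∫ x in Ioi (0:ℝ), (1/m) * (x ^ ((2:ℝ) - 1) * Real.exp (-(m⁻¹ * x))) := by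
    refine setIntegral_congr_fun measurableSet_Ioi (fun x hx => ?_)
    rw [show ((2:ℝ) - 1) = 1 by norm_num, Real.rpow_one, show -(m⁻¹ * x) = -x/m by ring]
    ring
  rw [this, integral_const_mul, Real.integral_rpow_mul_exp_neg_mul_Ioi (by norm_num)
    (inv_pos.mpr hm)]
  rw [Real.Gamma_two, mul_one, show (2:ℝ) = ((2:ℕ):ℝ) by norm_num, Real.rpow_natCast]
  field_simp

lemma concaveOn_sqrt_quadratic {A B D : ℝ} (hA : 0 ≤ A) (hB : 0 ≤ B) (hD : 0 ≤ D)
    (hdisc : 4*A*D ≤ B^2) :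
    ConcaveOn ℝ (Ici (0:ℝ)) (fun v => Real.sqrt (A*v^2 + B*v + D)) := by
  refine ⟨convex_Ici 0, fun x hx y hy a b ha hb hab => ?_⟩
  simp only [smul_eq_mul]
  have hx0 : (0:ℝ) ≤ x := hx
  have hy0 : (0:ℝ) ≤ y := hy
  have hqx : 0 ≤ A*x^2 + B*x + D := by positivity
  have hqy : 0 ≤ A*y^2 + B*y + D := by positivity
  have hz0 : 0 ≤ a*x + b*y := by positivity
  have hqz : 0 ≤ A*(a*x+b*y)^2 + B*(a*x+b*y) + D := by positivity
  have hE : 0 ≤ 2*A*x*y + B*x + B*y + 2*D := by positivity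
  have hkey : Real.sqrt (A*x^2 + B*x + D) * Real.sqrt (A*y^2 + B*y + D)
      ≤ (2*A*x*y + B*x + B*y + 2*D)/2 := by
    rw [← Real.sqrt_mul hqx]
    calc Real.sqrt ((A*x^2 + B*x + D) * (A*y^2 + B*y + D))
        ≤ Real.sqrt (((2*A*x*y + B*x + B*y + 2*D)/2)^2) := by
          apply Real.sqrt_le_sqrt
          nlinarith [sq_nonneg (x - y)]
      _ = (2*A*x*y + B*x + B*y + 2*D)/2 := Real.sqrt_sq (by positivity)
  have hLHS : 0 ≤ a * Real.sqrt (A*x^2 + B*x + D) + b * Real.sqrt (A*y^2 + B*y + D) := by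
    positivity
  rw [Real.le_sqrt hLHS hqz]
  have hsx := Real.sq_sqrt hqx
  have hsy := Real.sq_sqrt hqy
  have hb' : b = 1 - a := by linarith
  subst hb'
  have expand : (a * Real.sqrt (A*x^2 + B*x + D) + (1-a) * Real.sqrt (A*y^2 + B*y + D))^2
      = a^2 * (Real.sqrt (A*x^2 + B*x + D))^2
        + 2*(a*(1-a)) * (Real.sqrt (A*x^2 + B*x + D) * Real.sqrt (A*y^2 + B*y + D))
        + (1-a)^2 * (Real.sqrt (A*y^2 + B*y + D))^2 := by ring
  rw [expand, hsx, hsy]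
  have hint := mul_le_mul_of_nonneg_left hkey (by positivity : (0:ℝ) ≤ 2*(a*(1-a)))
  nlinarith [hint]

set_option maxHeartbeats 1600000 in
theorem stmt_3
    {Ω : Type*} [MeasurableSpace Ω] (μ : Measure Ω) [IsProbabilityMeasure μ]
    (g_sr g_rr : Ω → ℝ) (hg_sr : Measurable g_sr) (hg_rr : Measurable g_rr)
    (hindep : IndepFun g_sr g_rr μ)
    (π_sr π_rr : ℝ) (hπ_sr : 0 < π_sr) (hπ_rr : 0 < π_rr)
    (hlaw_sr : μ.map g_sr = expLaw π_sr)
    (hlaw_rr : μ.map g_rr = expLaw π_rr)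
    (P_s P_r : ℝ) (hP_s : 0 < P_s) (hP_r : 0 < P_r)
    (C : ℝ) (hC : C ∈ Set.Icc (0 : ℝ) 1)
    (r : ℝ) (hr : 0 < r)
    (γ α : ℝ) (hγ : γ = (2 : ℝ) ^ (2 * r) - 1)
    (hα : α = P_r * π_rr / (P_r * π_rr + 1)) :
    (μ {ω | (P_s * g_sr ω + P_r * g_rr ω + 1) ^ 2 - (P_r * g_rr ω * C) ^ 2
          < (2 : ℝ) ^ (2 * r) * ((P_r * g_rr ω + 1) ^ 2 - (P_r * g_rr ω * C) ^ 2)}).toReal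
      ≤ 1 - Real.exp (-(((P_r * π_rr + 1) / (P_s * π_sr)) * Psi γ (α * C))) := by
  obtain ⟨hC0, hC1⟩ := hC
  have hC2 : C^2 ≤ 1 := by nlinarith
  have hγpos : 0 < γ := by
    have h1 : (1:ℝ) < 2 ^ (2*r) :=
      (Real.one_lt_rpow_iff_of_pos (by norm_num)).mpr (Or.inl ⟨one_lt_two, by linarith⟩)
    rw [hγ]; linarith
  have hG : (2:ℝ)^(2*r) = 1 + γ := by rw [hγ]; ring
  obtain ⟨A, hAdef⟩ : ∃ A : ℝ, A = P_r^2*(1 + γ - γ*C^2) := ⟨_, rfl⟩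
  obtain ⟨B, hBdef⟩ : ∃ B : ℝ, B = 2*P_r*(1+γ) := ⟨_, rfl⟩
  obtain ⟨D, hDdef⟩ : ∃ D : ℝ, D = 1+γ := ⟨_, rfl⟩
  have hA : 0 ≤ A := by
    have h1 : 0 ≤ γ*(1 - C^2) := mul_nonneg hγpos.le (by linarith)
    have h2 : (0:ℝ) ≤ P_r^2 := sq_nonneg _
    rw [hAdef]; nlinarith
  have hB : 0 ≤ B := by rw [hBdef]; nlinarith
  have hD : 0 ≤ D := by rw [hDdef]; linarith
  have hdisc : 4*A*D ≤ B^2 := by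
    have h1 : 0 ≤ 4*P_r^2*γ*(1+γ)*C^2 :=
      mul_nonneg (mul_nonneg (mul_nonneg (by positivity) hγpos.le) (by linarith)) (sq_nonneg C)
    rw [hAdef, hBdef, hDdef]; nlinarith
  set f₁ : ℝ → ℝ := fun v => Real.sqrt (A*v^2 + B*v + D) - (P_r*v + 1) with hf₁def
  set lam := P_s * π_sr with hlamdef
  have hlam : 0 < lam := by rw [hlamdef]; positivity
  set φ : ℝ → ℝ := fun v => Real.exp (-(f₁ v / lam)) with hφdef
  have hq_lb : ∀ v : ℝ, 0 ≤ v → (P_r*v+1)^2 ≤ A*v^2 + B*v + D := by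
    intro v hv
    rw [hAdef, hBdef, hDdef]
    have h1 : C^2*(P_r*v)^2 ≤ (P_r*v+1)^2 := by nlinarith [mul_nonneg hP_r.le hv]
    nlinarith [mul_nonneg hγpos.le (sub_nonneg.mpr h1)]
  have hq_nonneg : ∀ v : ℝ, 0 ≤ v → 0 ≤ A*v^2 + B*v + D :=
    fun v hv => le_trans (sq_nonneg _) (hq_lb v hv)
  have hf₁nonneg : ∀ v : ℝ, 0 ≤ v → 0 ≤ f₁ v := by
    intro v hv
    rw [hf₁def]
    simp only [sub_nonneg]
    exact (Real.le_sqrt (by positivity) (hq_nonneg v hv)).mpr (hq_lb v hv)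
  set ν₁ := expLaw π_sr with hν₁def
  set ν₂ := expLaw π_rr with hν₂def
  haveI i1 : IsProbabilityMeasure ν₁ := expLaw_isProb hπ_sr
  haveI i2 : IsProbabilityMeasure ν₂ := expLaw_isProb hπ_rr
  have hcontq : Continuous (fun v : ℝ => A*v^2 + B*v + D) :=
    ((continuous_const.mul (continuous_pow 2)).add (continuous_const.mul continuous_id)).add
      continuous_const
  have hcontf₁ : Continuous f₁ := by
    rw [hf₁def]
    exact (Real.continuous_sqrt.comp hcontq).sub
      ((continuous_const.mul continuous_id).add continuous_const)
  have hcontφ : Continuous φ := by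
    rw [hφdef]
    exact Real.continuous_exp.comp ((hcontf₁.div_const lam).neg)
  set T : Set (ℝ×ℝ) := {p : ℝ×ℝ | (P_s*p.1 + P_r*p.2 + 1)^2 - (P_r*p.2*C)^2
      < (2:ℝ)^(2*r) * ((P_r*p.2+1)^2 - (P_r*p.2*C)^2)} with hTdef
  set T' : Set (ℝ×ℝ) := {p : ℝ×ℝ | p.1 < f₁ p.2 / P_s} with hT'def
  have hTmeas : MeasurableSet T := by
    rw [hTdef]
    have c1 : Continuous fun p : ℝ×ℝ => P_s*p.1 + P_r*p.2 + 1 := by fun_prop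
    have c2 : Continuous fun p : ℝ×ℝ => P_r*p.2*C := by fun_prop
    have c3 : Continuous fun p : ℝ×ℝ => P_r*p.2 + 1 := by fun_prop
    exact measurableSet_lt ((c1.pow 2).sub (c2.pow 2)).measurable
      (continuous_const.mul ((c3.pow 2).sub (c2.pow 2))).measurable
  have hT'meas : MeasurableSet T' := by
    rw [hT'def]
    exact measurableSet_lt measurable_fst
      (((hcontf₁.comp continuous_snd).div_const P_s).measurable)
  have hmap : μ.map (fun ω => (g_sr ω, g_rr ω)) = ν₁.prod ν₂ := by
    rw [← hlaw_sr, ← hlaw_rr]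
    exact (ProbabilityTheory.indepFun_iff_map_prod_eq_prod_map_map
      hg_sr.aemeasurable hg_rr.aemeasurable).mp hindep
  have hμS : μ {ω | (P_s * g_sr ω + P_r * g_rr ω + 1) ^ 2 - (P_r * g_rr ω * C) ^ 2
          < (2 : ℝ) ^ (2 * r) * ((P_r * g_rr ω + 1) ^ 2 - (P_r * g_rr ω * C) ^ 2)}
      = (ν₁.prod ν₂) T := by
    rw [← hmap, Measure.map_apply (hg_sr.prodMk hg_rr) hTmeas]
    rfl
  have hiff : ∀ u v : ℝ, 0 ≤ u → 0 ≤ v →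
      (((P_s*u + P_r*v + 1)^2 - (P_r*v*C)^2
        < (2:ℝ)^(2*r) * ((P_r*v+1)^2 - (P_r*v*C)^2)) ↔ u < f₁ v / P_s) := by
    intro u v hu hv
    rw [hG]
    have hX : (1+γ) * ((P_r*v+1)^2 - (P_r*v*C)^2) + (P_r*v*C)^2 = A*v^2 + B*v + D := by
      rw [hAdef, hBdef, hDdef]; ring
    have hs0 : 0 ≤ P_s*u + P_r*v + 1 := by
      nlinarith [mul_nonneg hP_s.le hu, mul_nonneg hP_r.le hv]
    constructor
    · intro h
      have h2 : (P_s*u + P_r*v + 1)^2 < A*v^2 + B*v + D := by linarith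
      have h3 := (Real.lt_sqrt hs0).mpr h2
      rw [lt_div_iff₀ hP_s]
      simp only [hf₁def]
      linarith [h3]
    · intro h
      rw [lt_div_iff₀ hP_s] at h
      simp only [hf₁def] at h
      have h3 : P_s*u + P_r*v + 1 < Real.sqrt (A*v^2 + B*v + D) := by linarith
      have h2 := (Real.lt_sqrt hs0).mp h3
      linarith
  have hbad : (ν₁.prod ν₂) {p : ℝ×ℝ | ¬(0 ≤ p.1 ∧ 0 ≤ p.2)} = 0 := by
    have hsub : {p : ℝ×ℝ | ¬(0 ≤ p.1 ∧ 0 ≤ p.2)}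
        ⊆ (Iio 0 ×ˢ (univ : Set ℝ)) ∪ ((univ : Set ℝ) ×ˢ Iio 0) := by
      intro p hp
      simp only [mem_setOf_eq, not_and_or, not_le] at hp
      rcases hp with h | h
      · exact Or.inl ⟨h, mem_univ _⟩
      · exact Or.inr ⟨mem_univ _, h⟩
    refine measure_mono_null hsub ?_
    refine le_antisymm (le_trans (measure_union_le _ _) ?_) (by simp)
    rw [Measure.prod_prod, Measure.prod_prod, hν₁def, hν₂def,
      expLaw_Iio_zero, expLaw_Iio_zero]
    simp
  have hTT' : (ν₁.prod ν₂) T = (ν₁.prod ν₂) T' := by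
    apply measure_congr
    rw [MeasureTheory.ae_eq_set]
    constructor
    · refine measure_mono_null (fun p hp => ?_) hbad
      intro hgood
      exact hp.2 ((hiff p.1 p.2 hgood.1 hgood.2).mp hp.1)
    · refine measure_mono_null (fun p hp => ?_) hbad
      intro hgood
      exact hp.2 ((hiff p.1 p.2 hgood.1 hgood.2).mpr hp.1)
  have hslice : (ν₁.prod ν₂) T' = ∫⁻ v, ν₁ (Iio (f₁ v / P_s)) ∂ν₂ := by
    rw [Measure.prod_apply_symm hT'meas]
    exact lintegral_congr fun v => rfl
  have hstep : (ν₁.prod ν₂) T' = ∫⁻ v, ENNReal.ofReal (1 - φ v) ∂ν₂ := by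
    rw [hslice]
    refine lintegral_congr_ae ?_
    filter_upwards [expLaw_ae_nonneg (m := π_rr)] with v hv
    rw [hν₁def, expLaw_Iio_of_nonneg hπ_sr (div_nonneg (hf₁nonneg v hv) hP_s.le)]
    congr 2
    simp only [hφdef]
    rw [div_div, ← hlamdef]
  have hφle1 : ∀ᵐ v ∂ν₂, φ v ≤ 1 := by
    filter_upwards [expLaw_ae_nonneg (m := π_rr)] with v hv
    simp only [hφdef]
    rw [Real.exp_le_one_iff]
    have := hf₁nonneg v hv
    have h2 : 0 ≤ f₁ v / lam := div_nonneg this hlam.le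
    linarith
  have hφnonneg : ∀ v : ℝ, 0 < φ v := fun v => Real.exp_pos _
  have hsubnn : ∀ᵐ v ∂ν₂, 0 ≤ 1 - φ v := by
    filter_upwards [hφle1] with v hv; linarith
  have hφint : Integrable φ ν₂ := by
    refine Integrable.mono' (integrable_const 1) hcontφ.aestronglyMeasurable ?_
    filter_upwards [hφle1] with v hv
    rw [Real.norm_eq_abs, abs_of_pos (hφnonneg v)]
    exact hv
  have h1mφint : Integrable (fun v => 1 - φ v) ν₂ := (integrable_const 1).sub hφint
  have htoReal : ((ν₁.prod ν₂) T').toReal = ∫ v, (1 - φ v) ∂ν₂ := by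
    rw [hstep, ← ofReal_integral_eq_lintegral_ofReal h1mφint hsubnn,
      ENNReal.toReal_ofReal (integral_nonneg_of_ae hsubnn)]
  have hconcq : ConcaveOn ℝ (Ici (0:ℝ)) (fun v => Real.sqrt (A*v^2 + B*v + D)) :=
    concaveOn_sqrt_quadratic hA hB hD hdisc
  have hconcf₁ : ConcaveOn ℝ (Ici (0:ℝ)) f₁ := by
    have hlin : ConvexOn ℝ (Ici (0:ℝ)) (fun v => P_r*v + 1) := by
      refine ⟨convex_Ici 0, fun x hx y hy a b ha hb hab => ?_⟩
      simp only [smul_eq_mul]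
      nlinarith [hab]
    rw [hf₁def]
    exact hconcq.sub hlin
  have hconvφ : ConvexOn ℝ (Ici (0:ℝ)) φ := by
    refine ⟨convex_Ici 0, fun x hx y hy a b ha hb hab => ?_⟩
    simp only [hφdef, smul_eq_mul]
    have h1 := hconcf₁.2 hx hy ha hb hab
    simp only [smul_eq_mul] at h1
    have h2 : a * (f₁ x / lam) + b * (f₁ y / lam) ≤ f₁ (a*x + b*y) / lam := by
      have h3 : (a * f₁ x + b * f₁ y) / lam ≤ f₁ (a*x + b*y) / lam := by gcongr
      calc a * (f₁ x / lam) + b * (f₁ y / lam) = (a * f₁ x + b * f₁ y)/lam := by ring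
        _ ≤ _ := h3
    calc Real.exp (-(f₁ (a*x + b*y)/lam))
        ≤ Real.exp (a * (-(f₁ x/lam)) + b * (-(f₁ y/lam))) := by
          apply Real.exp_le_exp.mpr; linarith
      _ ≤ a * Real.exp (-(f₁ x/lam)) + b * Real.exp (-(f₁ y/lam)) := by
          have := convexOn_exp.2 (Set.mem_univ (-(f₁ x/lam))) (Set.mem_univ (-(f₁ y/lam)))
            ha hb hab
          simpa using this
  have hjensen : φ (∫ v, v ∂ν₂) ≤ ∫ v, φ v ∂ν₂ := by
    have := hconvφ.map_integral_le (f := fun v : ℝ => v) hcontφ.continuousOn isClosed_Ici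
      (by filter_upwards [expLaw_ae_nonneg (m := π_rr)] with v hv; exact hv)
      (expLaw_integrable_id hπ_rr) (by simpa [Function.comp_def] using hφint)
    simpa using this
  rw [show (∫ v, v ∂ν₂) = π_rr from by rw [hν₂def]; exact expLaw_mean hπ_rr] at hjensen
  have hm1 : (0:ℝ) < P_r*π_rr + 1 := by positivity
  have hφval : φ π_rr = Real.exp (-(((P_r * π_rr + 1) / (P_s * π_sr)) * Psi γ (α*C))) := by
    simp only [hφdef]
    congr 1
    have hPsi : f₁ π_rr = (P_r*π_rr+1) * Psi γ (α*C) := by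
      simp only [hf₁def, Psi]
      have hsq : Real.sqrt (A*π_rr^2 + B*π_rr + D)
          = (P_r*π_rr+1) * Real.sqrt (1 + γ*(1-(α*C)^2)) := by
        rw [← Real.sqrt_sq hm1.le, ← Real.sqrt_mul (by positivity)]
        congr 1
        rw [hα, hAdef, hBdef, hDdef]
        field_simp
        ring
      rw [hsq]; ring
    rw [hPsi, hlamdef]
    field_simp
  rw [hμS, hTT', htoReal, integral_sub (integrable_const 1) hφint, integral_const]
  simp only [measure_univ, ENNReal.toReal_one, probReal_univ, smul_eq_mul, one_mul, mul_one]
  have hfinal : Real.exp (-(((P_r * π_rr + 1) / (P_s * π_sr)) * Psi γ (α*C)))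
      ≤ ∫ v, φ v ∂ν₂ := by
    rw [← hφval]; exact hjensen
  linarith
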